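/- Let $R$ be an irreducible simply-laced root system with highest root $\alpha_0$. Let $\gamma \in R^+$ and let $v$ be an element of the Weyl group of minimal length such that $v(\gamma) = \alpha_0$. Then for every positive root $\mu$ with $v(\mu) \in R^-$, one has $\langle \mu, \gamma^\vee \rangle = -1$. -/

import Mathlib

open scoped RealInnerProductSpace

noncomputable section

variable {V : Type} [NormedAddCommGroup V] [InnerProductSpace ℝ V]

/-- The reflection of `V` in the hyperplane orthogonal to `α`
(the identity map when `α = 0`). -/
def reflVec (α : V) : V ≃ₗ[ℝ] V where
  toFun x := x - (2 * ⟪x, α⟫ / ⟪α, α⟫) • α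
  invFun x := x - (2 * ⟪x, α⟫ / ⟪α, α⟫) • α
  map_add' x y := by
    try dsimp only
    have h : 2 * ⟪x + y, α⟫ / ⟪α, α⟫ = 2 * ⟪x, α⟫ / ⟪α, α⟫ + 2 * ⟪y, α⟫ / ⟪α, α⟫ := by
      rw [inner_add_left]; ring
    rw [h, add_smul]; abel
  map_smul' r x := by
    try dsimp only
    have h : 2 * ⟪r • x, α⟫ / ⟪α, α⟫ = r * (2 * ⟪x, α⟫ / ⟪α, α⟫) := by
      rw [real_inner_smul_left]; ring
    simp only [RingHom.id_apply]
    rw [h, mul_smul, smul_sub]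
  left_inv x := by
    dsimp only
    by_cases h : (⟪α, α⟫ : ℝ) = 0
    · simp [inner_self_eq_zero.mp h]
    · have h2 : 2 * ⟪x - (2 * ⟪x, α⟫ / ⟪α, α⟫) • α, α⟫ / ⟪α, α⟫
          = -(2 * ⟪x, α⟫ / ⟪α, α⟫) := by
        rw [inner_sub_left, real_inner_smul_left]
        field_simp
        ring
      rw [h2, neg_smul, sub_neg_eq_add, sub_add_cancel]
  right_inv x := by
    dsimp only
    by_cases h : (⟪α, α⟫ : ℝ) = 0
    · simp [inner_self_eq_zero.mp h]
    · have h2 : 2 * ⟪x - (2 * ⟪x, α⟫ / ⟪α, α⟫) • α, α⟫ / ⟪α, α⟫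
          = -(2 * ⟪x, α⟫ / ⟪α, α⟫) := by
        rw [inner_sub_left, real_inner_smul_left]
        field_simp
        ring
      rw [h2, neg_smul, sub_neg_eq_add, sub_add_cancel]

/-- The pairing `⟨x, y^∨⟩ = 2(x,y)/(y,y)` of a vector with the coroot of `y`. -/
def cpair (x y : V) : ℝ := 2 * ⟪x, y⟫ / ⟪y, y⟫

/-- A (reduced, crystallographic) root system in a real inner product space,
together with a chosen system of simple roots. -/
structure RootSystemData (V : Type) [NormedAddCommGroup V] [InnerProductSpace ℝ V] where
  roots : Finset V
  simples : Finset V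
  simples_subset : simples ⊆ roots
  root_ne_zero : ∀ α ∈ roots, α ≠ 0
  pairing_int : ∀ α ∈ roots, ∀ β ∈ roots, ∃ n : ℤ, (n : ℝ) = cpair α β
  reflect_mem : ∀ α ∈ roots, ∀ β ∈ roots, reflVec α β ∈ roots
  reduced : ∀ α ∈ roots, ∀ t : ℝ, t • α ∈ roots → t = 1 ∨ t = -1
  simples_indep : LinearIndependent ℝ (fun a : {x // x ∈ simples} => (a : V))
  root_pos_or_neg : ∀ β ∈ roots,
    (∃ c : V → ℕ, β = ∑ α ∈ simples, (c α : ℝ) • α) ∨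
    (∃ c : V → ℕ, -β = ∑ α ∈ simples, (c α : ℝ) • α)

namespace RootSystemData

/-- `v` is a non-negative integer combination of the elements of `I`. -/
def IsPosCombOf (P : RootSystemData V) (I : Finset V) (v : V) : Prop :=
  ∃ c : V → ℕ, v = ∑ α ∈ I, (c α : ℝ) • α

/-- `v` is a non-negative integer combination of the simple roots. -/
def IsPosComb (P : RootSystemData V) (v : V) : Prop := P.IsPosCombOf P.simples v

/-- The set of positive roots. -/
def Pos (P : RootSystemData V) : Set V := {β | β ∈ P.roots ∧ P.IsPosComb β}

/-- The set of negative roots. -/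
def Neg (P : RootSystemData V) : Set V := {β | -β ∈ P.Pos}

/-- The positive roots lying in the root subsystem generated by `I`. -/
def PosOf (P : RootSystemData V) (I : Finset V) : Set V := {β | β ∈ P.roots ∧ P.IsPosCombOf I β}

/-- The half sum of the positive roots. -/
def rho (P : RootSystemData V) : V := (2 : ℝ)⁻¹ • ∑ᶠ β ∈ P.Pos, β

/-- The half sum of the positive roots in the root subsystem generated by `I`. -/
def rhoOf (P : RootSystemData V) (I : Finset V) : V := (2 : ℝ)⁻¹ • ∑ᶠ β ∈ P.PosOf I, β

/-- The parabolic subgroup of the Weyl group generated by the reflections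
in the elements of `I`. -/
def WeylOf (P : RootSystemData V) (I : Finset V) : Subgroup (V ≃ₗ[ℝ] V) :=
  Subgroup.closure (reflVec '' (I : Set V))

/-- The Weyl group, generated by the simple reflections. -/
def Weyl (P : RootSystemData V) : Subgroup (V ≃ₗ[ℝ] V) := P.WeylOf P.simples

/-- `l` is a word with letters in `I` whose associated product of reflections is `w`. -/
def IsWordOf (P : RootSystemData V) (I : Finset V) (l : List V) (w : V ≃ₗ[ℝ] V) : Prop :=
  (∀ α ∈ l, α ∈ I) ∧ (l.map reflVec).prod = w

/-- The length of `w` with respect to the reflections in the elements of `I`. -/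
def lengthOf (P : RootSystemData V) (I : Finset V) (w : V ≃ₗ[ℝ] V) : ℕ :=
  sInf {n | ∃ l, P.IsWordOf I l w ∧ l.length = n}

/-- The Coxeter length of `w` with respect to the simple reflections. -/
def length (P : RootSystemData V) (w : V ≃ₗ[ℝ] V) : ℕ := P.lengthOf P.simples w

/-- `l` is a reduced decomposition of `w` into simple reflections. -/
def IsReducedWord (P : RootSystemData V) (l : List V) (w : V ≃ₗ[ℝ] V) : Prop :=
  P.IsWordOf P.simples l w ∧ l.length = P.length w

/-- The partial order on the root lattice: `x ≤ y` iff `y - x` is a non-negative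
integer combination of simple roots. -/
def rootLE (P : RootSystemData V) (x y : V) : Prop := P.IsPosComb (y - x)

/-- The root system is simply laced: all roots have the same length. -/
def SimplyLaced (P : RootSystemData V) : Prop := ∀ α ∈ P.roots, ∀ β ∈ P.roots, ⟪α, α⟫ = ⟪β, β⟫

/-- The root system is irreducible: it admits no decomposition into two
non-empty mutually orthogonal parts. -/
def Irred (P : RootSystemData V) : Prop :=
  ∀ A B : Set V, (P.roots : Set V) ⊆ A ∪ B →
    (∀ a ∈ A ∩ (P.roots : Set V), ∀ b ∈ B ∩ (P.roots : Set V), ⟪a, b⟫ = 0) →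
    A ∩ (P.roots : Set V) = ∅ ∨ B ∩ (P.roots : Set V) = ∅

/-- `ϖ` is the fundamental weight associated with the simple root `α`. -/
def IsFundamentalWeight (P : RootSystemData V) (α ϖ : V) : Prop :=
  cpair ϖ α = 1 ∧ ∀ γ ∈ P.simples, γ ≠ α → cpair ϖ γ = 0

/-- The weight `ϖ` is minuscule: it pairs with every positive coroot by at most `1`. -/
def IsMinusculeWeight (P : RootSystemData V) (ϖ : V) : Prop := ∀ β ∈ P.Pos, cpair ϖ β ≤ 1

/-- The support of `w`: the set of simple roots whose reflections occur in a
reduced decomposition of `w`. -/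
def Supp (P : RootSystemData V) (w : V ≃ₗ[ℝ] V) : Set V :=
  {δ | δ ∈ P.simples ∧ ∃ l, P.IsReducedWord l w ∧ δ ∈ l}

end RootSystemData

section Aux

open RootSystemData Finset

lemma reflVec_apply (α x : V) : reflVec α x = x - (2 * ⟪x, α⟫ / ⟪α, α⟫) • α := rfl

lemma reflVec_inv (α : V) : (reflVec α)⁻¹ = reflVec α := rfl

lemma reflVec_mul_self (α : V) : reflVec α * reflVec α = 1 := by
  rw [← reflVec_inv α]; exact mul_inv_cancel _

lemma mul_apply_lin (f g : V ≃ₗ[ℝ] V) (x : V) : (f * g) x = f (g x) := rfl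

lemma reflVec_inner (α x y : V) : ⟪reflVec α x, reflVec α y⟫ = ⟪x, y⟫ := by
  by_cases h : (⟪α, α⟫ : ℝ) = 0
  · have : α = 0 := inner_self_eq_zero.mp h
    simp [reflVec_apply, this]
  · rw [reflVec_apply, reflVec_apply]
    simp only [inner_sub_left, inner_sub_right, real_inner_smul_left, real_inner_smul_right]
    rw [real_inner_comm α y]
    field_simp
    ring

lemma reflVec_self (α : V) (h : (⟪α, α⟫ : ℝ) ≠ 0) : reflVec α α = -α := by
  rw [reflVec_apply, mul_div_assoc, div_self h]
  module

lemma reflVec_apply_cpair (α x : V) : reflVec α x = x - cpair x α • α := rfl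

end Aux
namespace RootSystemData
open Finset

variable (P : RootSystemData V)

lemma zero_comb {r : V → ℝ} (h : ∑ α ∈ P.simples, r α • α = 0) :
    ∀ α ∈ P.simples, r α = 0 := by
  intro α hα
  have h2 : ∑ i ∈ P.simples.attach, r (i : V) • (i : V) = 0 := by
    rw [Finset.sum_attach P.simples (fun x => r x • x)]; exact h
  have := linearIndependent_iff'.mp P.simples_indep P.simples.attach (fun i => r (i : V)) h2
    ⟨α, hα⟩ (Finset.mem_attach _ _)
  exact this

lemma inner_root_ne_zero {β : V} (hβ : β ∈ P.roots) : (⟪β, β⟫ : ℝ) ≠ 0 := by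
  simpa [inner_self_eq_zero] using P.root_ne_zero β hβ

lemma neg_root_mem {β : V} (hβ : β ∈ P.roots) : -β ∈ P.roots := by
  have := P.reflect_mem β hβ β hβ
  rwa [reflVec_self β (P.inner_root_ne_zero hβ)] at this

lemma pos_mem_roots {β : V} (hβ : β ∈ P.Pos) : β ∈ P.roots := hβ.1

lemma neg_mem_roots {β : V} (hβ : β ∈ P.Neg) : β ∈ P.roots := by
  have := P.neg_root_mem (P.pos_mem_roots hβ)
  rwa [neg_neg] at this

/-- A vector cannot be in both `Pos` and `Neg`. -/
lemma pos_neg_disjoint {β : V} (hβ : β ∈ P.Pos) (hβ' : β ∈ P.Neg) : False := by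
  obtain ⟨hr, c, hc⟩ := hβ
  obtain ⟨hr', d, hd⟩ := hβ'
  have hsum : ∑ α ∈ P.simples, ((c α : ℝ) + (d α : ℝ)) • α = 0 := by
    simp only [add_smul, Finset.sum_add_distrib, ← hc, ← hd]
    abel
  have hzero := P.zero_comb hsum
  have : β = 0 := by
    rw [hc]
    apply Finset.sum_eq_zero
    intro α hα
    have h1 : (0:ℝ) ≤ (c α : ℝ) := Nat.cast_nonneg _
    have h2 : (0:ℝ) ≤ (d α : ℝ) := Nat.cast_nonneg _
    have hc0 : (c α : ℝ) = 0 := by linarith [hzero α hα]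
    rw [hc0, zero_smul]
  exact P.root_ne_zero β hr this

/-- Every root is positive or negative. -/
lemma root_pos_or_neg' {β : V} (hβ : β ∈ P.roots) : β ∈ P.Pos ∨ β ∈ P.Neg := by
  rcases P.root_pos_or_neg β hβ with ⟨c, hc⟩ | ⟨c, hc⟩
  · exact Or.inl ⟨hβ, c, hc⟩
  · exact Or.inr ⟨P.neg_root_mem hβ, c, hc⟩

end RootSystemData
namespace RootSystemData
open Finset

variable (P : RootSystemData V)

lemma cpair_neg_left (x y : V) : cpair (-x) y = - cpair x y := by
  unfold cpair; rw [inner_neg_left]; ring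

lemma cpair_ge_neg_two (hSL : P.SimplyLaced) {α β : V} (hα : α ∈ P.roots) (hβ : β ∈ P.roots) :
    -2 ≤ cpair α β := by
  have hq : (0:ℝ) < ⟪β, β⟫ := lt_of_le_of_ne real_inner_self_nonneg
    (Ne.symm (P.inner_root_ne_zero hβ))
  have hlen : (⟪α, α⟫ : ℝ) = ⟪β, β⟫ := hSL α hα β hβ
  have h0 : (0:ℝ) ≤ ⟪α + β, α + β⟫ := real_inner_self_nonneg
  rw [inner_add_add_self, hlen] at h0
  unfold cpair
  rw [le_div_iff₀ hq]
  nlinarith [real_inner_comm α β]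

lemma cpair_le_two (hSL : P.SimplyLaced) {α β : V} (hα : α ∈ P.roots) (hβ : β ∈ P.roots) :
    cpair α β ≤ 2 := by
  have := P.cpair_ge_neg_two hSL (P.neg_root_mem hα) hβ
  rw [cpair_neg_left] at this
  linarith

lemma eq_neg_of_cpair_eq_neg_two (hSL : P.SimplyLaced) {α β : V} (hα : α ∈ P.roots)
    (hβ : β ∈ P.roots) (h : cpair α β = -2) : α = -β := by
  have hq : (0:ℝ) < ⟪β, β⟫ := lt_of_le_of_ne real_inner_self_nonneg
    (Ne.symm (P.inner_root_ne_zero hβ))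
  have hlen : (⟪α, α⟫ : ℝ) = ⟪β, β⟫ := hSL α hα β hβ
  have hip : (⟪α, β⟫ : ℝ) = -⟪β, β⟫ := by
    unfold cpair at h
    field_simp at h
    linarith
  have h0 : (⟪α + β, α + β⟫ : ℝ) = 0 := by
    have hip2 : (⟪β, α⟫ : ℝ) = -⟪β, β⟫ := by rw [real_inner_comm]; exact hip
    rw [inner_add_add_self, hlen]
    linarith [hip, hip2]
  exact eq_neg_of_add_eq_zero_left (inner_self_eq_zero.mp h0)
  
lemma eq_of_cpair_eq_two (hSL : P.SimplyLaced) {α β : V} (hα : α ∈ P.roots)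
    (hβ : β ∈ P.roots) (h : cpair α β = 2) : α = β := by
  have := P.eq_neg_of_cpair_eq_neg_two hSL (P.neg_root_mem hα) hβ (by rw [cpair_neg_left, h])
  rw [neg_eq_iff_eq_neg] at this
  rw [this, neg_neg]

end RootSystemData
namespace RootSystemData
open Finset

variable (P : RootSystemData V)

lemma word_inner (l : List V) (x y : V) :
    ⟪(l.map reflVec).prod x, (l.map reflVec).prod y⟫ = ⟪x, y⟫ := by
  induction l with
  | nil => simp
  | cons a t ih =>
    simp only [List.map_cons, List.prod_cons, mul_apply_lin]
    rw [reflVec_inner]; exact ih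

lemma word_root {l : List V} (hl : ∀ α ∈ l, α ∈ P.roots) {β : V} (hβ : β ∈ P.roots) :
    (l.map reflVec).prod β ∈ P.roots := by
  induction l with
  | nil => simpa using hβ
  | cons a t ih =>
    simp only [List.map_cons, List.prod_cons, mul_apply_lin]
    exact P.reflect_mem a (hl a List.mem_cons_self) _
      (ih (fun α hα => hl α (List.mem_cons_of_mem a hα)))

lemma prod_reverse (l : List V) :
    (l.reverse.map reflVec).prod = ((l.map reflVec).prod)⁻¹ := by
  induction l with
  | nil => simp
  | cons a t ih =>
    simp only [List.reverse_cons, List.map_append, List.prod_append, List.map_cons,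
      List.prod_cons, List.map_nil, List.prod_nil, mul_one, ih, mul_inv_rev, reflVec_inv]

lemma exists_word {w : V ≃ₗ[ℝ] V} (hw : w ∈ P.Weyl) :
    ∃ l : List V, P.IsWordOf P.simples l w := by
  induction hw using Subgroup.closure_induction'' with
  | one => exact ⟨[], fun α h => absurd h List.not_mem_nil, by simp⟩
  | mem x hx =>
    obtain ⟨α, hα, rfl⟩ := hx
    exact ⟨[α], by simpa using hα, by simp⟩
  | inv_mem x hx =>
    obtain ⟨α, hα, rfl⟩ := hx
    exact ⟨[α], by simpa using hα, by simp [reflVec_inv]⟩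
  | mul x y hx hy ihx ihy =>
    obtain ⟨l1, hl1, hp1⟩ := ihx
    obtain ⟨l2, hl2, hp2⟩ := ihy
    exact ⟨l1 ++ l2, fun α hα => (List.mem_append.mp hα).elim (hl1 α) (hl2 α),
      by rw [List.map_append, List.prod_append, hp1, hp2]⟩

lemma word_mem_Weyl {l : List V} {w : V ≃ₗ[ℝ] V} (hl : P.IsWordOf P.simples l w) :
    w ∈ P.Weyl := by
  rw [← hl.2]
  apply list_prod_mem
  intro x hx
  obtain ⟨α, hα, rfl⟩ := List.mem_map.mp hx
  exact Subgroup.subset_closure ⟨α, hl.1 α hα, rfl⟩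

lemma length_le_of_word {l : List V} {w : V ≃ₗ[ℝ] V} (hl : P.IsWordOf P.simples l w) :
    P.length w ≤ l.length := Nat.sInf_le ⟨l, hl, rfl⟩

lemma exists_reduced {w : V ≃ₗ[ℝ] V} (hw : w ∈ P.Weyl) :
    ∃ l : List V, P.IsWordOf P.simples l w ∧ l.length = P.length w := by
  obtain ⟨l, hl⟩ := P.exists_word hw
  have hne : {n | ∃ l, P.IsWordOf P.simples l w ∧ l.length = n}.Nonempty := ⟨l.length, l, hl, rfl⟩
  exact Nat.sInf_mem hne

lemma reflVec_conj (w : V ≃ₗ[ℝ] V) (hw : ∀ x y : V, ⟪w x, w y⟫ = ⟪x, y⟫) (μ : V) :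
    w * reflVec μ * w⁻¹ = reflVec (w μ) := by
  ext x
  have h1 : (⟪w⁻¹ x, μ⟫ : ℝ) = ⟪x, w μ⟫ := by
    rw [← hw (w⁻¹ x) μ]
    congr 1
    exact w.apply_symm_apply x
  have h2 : (⟪μ, μ⟫ : ℝ) = ⟪w μ, w μ⟫ := (hw μ μ).symm
  show w ((reflVec μ) (w⁻¹ x)) = _
  rw [reflVec_apply, reflVec_apply, h1, h2, map_sub, map_smul]
  congr 1
  exact w.apply_symm_apply x

end RootSystemData
namespace RootSystemData
open Finset

variable (P : RootSystemData V)

lemma eq_simple_of_reflVec_neg {α β : V} (hα : α ∈ P.simples) (hβ : β ∈ P.Pos)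
    (hneg : reflVec α β ∈ P.Neg) : β = α := by
  classical
  obtain ⟨hβr, c, hc⟩ := hβ
  obtain ⟨_, d, hd⟩ := hneg
  rw [reflVec_apply_cpair, neg_sub] at hd
  -- hd : cpair β α • α - β = ∑ d • x
  have hite : ∑ x ∈ P.simples, (if x = α then cpair β α else 0) • x = cpair β α • α := by
    simp only [ite_smul, zero_smul]
    rw [Finset.sum_ite_eq' P.simples α (fun x => cpair β α • x)]
    simp [hα]
  have hsum : ∑ x ∈ P.simples,
      ((c x : ℝ) + (d x : ℝ) - (if x = α then cpair β α else 0)) • x = 0 := by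
    simp only [sub_smul, add_smul, Finset.sum_sub_distrib, Finset.sum_add_distrib]
    rw [hite, ← hc, ← hd]
    abel
  have hz := P.zero_comb hsum
  have hc0 : ∀ x ∈ P.simples, x ≠ α → (c x : ℝ) = 0 := by
    intro x hx hxα
    have := hz x hx
    rw [if_neg hxα] at this
    have h1 : (0:ℝ) ≤ (c x : ℝ) := Nat.cast_nonneg _
    have h2 : (0:ℝ) ≤ (d x : ℝ) := Nat.cast_nonneg _
    linarith
  have hβeq : β = (c α : ℝ) • α := by
    rw [hc]
    rw [Finset.sum_eq_single α]
    · intro x hx hxα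
      rw [hc0 x hx hxα, zero_smul]
    · intro h; exact absurd hα h
  have := P.reduced α (P.simples_subset hα) (c α) (by rw [← hβeq]; exact hβr)
  rcases this with h1 | h1
  · rw [hβeq, h1, one_smul]
  · exfalso
    have : (0:ℝ) ≤ (c α : ℝ) := Nat.cast_nonneg _
    rw [h1] at this; linarith

lemma exchange : ∀ (l : List V), (∀ α ∈ l, α ∈ P.simples) → ∀ {μ : V}, μ ∈ P.Pos →
    (l.map reflVec).prod μ ∈ P.Neg →
    ∃ l' : List V, (∀ α ∈ l', α ∈ P.simples) ∧ l'.length + 1 = l.length ∧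
      (l'.map reflVec).prod = (l.map reflVec).prod * reflVec μ := by
  intro l
  induction l with
  | nil =>
    intro _ μ hμ hneg
    exact absurd hμ (fun h => P.pos_neg_disjoint h (by simpa using hneg))
  | cons s t ih =>
    intro hl μ hμ hneg
    have hts : ∀ α ∈ t, α ∈ P.simples := fun α hα => hl α (List.mem_cons_of_mem s hα)
    have htr : ∀ α ∈ t, α ∈ P.roots := fun α hα => P.simples_subset (hts α hα)
    have hwμroot : (t.map reflVec).prod μ ∈ P.roots := P.word_root htr (P.pos_mem_roots hμ)
    simp only [List.map_cons, List.prod_cons, mul_apply_lin] at hneg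
    rcases P.root_pos_or_neg' hwμroot with hpos | hneg'
    · -- (t.prod) μ = s
      have heq : (t.map reflVec).prod μ = s :=
        P.eq_simple_of_reflVec_neg (hl s List.mem_cons_self) hpos hneg
      refine ⟨t, hts, by simp, ?_⟩
      have hconj := reflVec_conj (t.map reflVec).prod (word_inner t) μ
      rw [heq] at hconj
      simp only [List.map_cons, List.prod_cons]
      rw [← hconj]
      have : (t.map reflVec).prod * reflVec μ * ((t.map reflVec).prod)⁻¹ *
          (t.map reflVec).prod * reflVec μ
          = (t.map reflVec).prod * (reflVec μ * reflVec μ) := by group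
      rw [this, reflVec_mul_self, mul_one]
    · obtain ⟨l'', hl'', hlen, hprod⟩ := ih hts hμ hneg'
      refine ⟨s :: l'', ?_, by simpa using hlen, ?_⟩
      · intro α hα
        rcases List.mem_cons.mp hα with h | h
        · rw [h]; exact hl s List.mem_cons_self
        · exact hl'' α h
      · simp only [List.map_cons, List.prod_cons, hprod, mul_assoc]

end RootSystemData
/-- In an irreducible simply-laced root system with highest root `α₀`,
if `v` is of minimal length with `v(γ) = α₀` (`γ` a positive root), then every positive
root `μ` with `v(μ) ∈ R⁻` satisfies `⟨μ, γ^∨⟩ = -1`. -/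
theorem cpair_eq_neg_one_of_minimal (P : RootSystemData V)
    (hSL : P.SimplyLaced) (hirr : P.Irred)
    (α₀ : V) (h₀ : α₀ ∈ P.Pos) (hhighest : ∀ β ∈ P.roots, P.rootLE β α₀)
    (γ : V) (hγ : γ ∈ P.Pos)
    (v : V ≃ₗ[ℝ] V) (hv : v ∈ P.Weyl) (hvγ : v γ = α₀)
    (hmin : ∀ u ∈ P.Weyl, u γ = α₀ → P.length v ≤ P.length u)
    (μ : V) (hμ : μ ∈ P.Pos) (hneg : v μ ∈ P.Neg) :
    cpair μ γ = -1 := by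
  classical
  have hγr : γ ∈ P.roots := hγ.1
  have hμr : μ ∈ P.roots := hμ.1
  have hα₀r : α₀ ∈ P.roots := h₀.1
  obtain ⟨lv, hlv⟩ := P.exists_word hv
  have hviso : ∀ x y : V, ⟪v x, v y⟫ = ⟪x, y⟫ := by
    intro x y; rw [← hlv.2]; exact RootSystemData.word_inner lv x y
  have hvμr : v μ ∈ P.roots := P.neg_mem_roots hneg
  -- Step A : invariance of the pairing
  have hA : cpair μ γ = cpair (v μ) α₀ := by
    unfold cpair; rw [← hvγ, hviso, hviso]
  -- Step C : any positive root pairs non-negatively with the highest root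
  have hposC : ∀ β, β ∈ P.Pos → 0 ≤ cpair β α₀ := by
    intro β hβ
    by_contra hlt
    push_neg at hlt
    obtain ⟨n, hn⟩ := P.pairing_int β hβ.1 α₀ hα₀r
    have hge := P.cpair_ge_neg_two hSL hβ.1 hα₀r
    have h1 : (-2:ℤ) ≤ n := by exact_mod_cast hn ▸ hge
    have h2 : n < 0 := by
      have : ((n:ℝ)) < 0 := by rw [hn]; exact hlt
      exact_mod_cast this
    have hn2 : n = -2 ∨ n = -1 := by omega
    rcases hn2 with h | h
    · have heq := P.eq_neg_of_cpair_eq_neg_two hSL hβ.1 hα₀r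
        (by rw [← hn, h]; push_cast; ring)
      exact P.pos_neg_disjoint h₀ (show -α₀ ∈ P.Pos from heq ▸ hβ)
    · have hδ : reflVec α₀ β ∈ P.roots := P.reflect_mem α₀ hα₀r β hβ.1
      have hδeq : reflVec α₀ β = β + α₀ := by
        rw [reflVec_apply_cpair, ← hn, h]; push_cast; module
      have hle := hhighest _ hδ
      rw [hδeq] at hle
      unfold RootSystemData.rootLE at hle
      have habel : α₀ - (β + α₀) = -β := by abel
      rw [habel] at hle
      exact P.pos_neg_disjoint hβ ⟨P.neg_root_mem hβ.1, hle⟩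
  have hC : cpair (v μ) α₀ ≤ 0 := by
    have h1 := hposC (-(v μ)) hneg
    rw [RootSystemData.cpair_neg_left] at h1; linarith
  obtain ⟨n, hn⟩ := P.pairing_int μ hμr γ hγr
  have hge := P.cpair_ge_neg_two hSL hμr hγr
  have hne2 : cpair μ γ ≠ -2 := by
    intro h
    have heq := P.eq_neg_of_cpair_eq_neg_two hSL hμr hγr h
    exact P.pos_neg_disjoint hγ (show -γ ∈ P.Pos from heq ▸ hμ)
  have hne0 : cpair μ γ ≠ 0 := by
    intro h0
    have hip : (⟪γ, μ⟫ : ℝ) = 0 := by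
      unfold cpair at h0
      rw [div_eq_zero_iff] at h0
      rcases h0 with h0 | h0
      · rw [real_inner_comm]; linarith
      · exact absurd h0 (P.inner_root_ne_zero hγr)
    have hfix : reflVec μ γ = γ := by
      rw [reflVec_apply_cpair]
      unfold cpair
      rw [hip]
      norm_num
    obtain ⟨l, hl, hlen⟩ := P.exists_reduced hv
    have hprodμ : (l.map reflVec).prod μ ∈ P.Neg := by rw [hl.2]; exact hneg
    obtain ⟨l', hl', hlen', hprod'⟩ := P.exchange l hl.1 hμ hprodμ
    have hu : P.IsWordOf P.simples l' (v * reflVec μ) := ⟨hl', by rw [hprod', hl.2]⟩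
    have huW : v * reflVec μ ∈ P.Weyl := P.word_mem_Weyl hu
    have huγ : (v * reflVec μ) γ = α₀ := by rw [mul_apply_lin, hfix, hvγ]
    have h1 := hmin _ huW huγ
    have h2 := P.length_le_of_word hu
    omega
  have hle0 : cpair μ γ ≤ 0 := by rw [hA]; exact hC
  rw [← hn] at hge hne2 hne0 hle0 ⊢
  have h1 : (-2:ℤ) ≤ n := by exact_mod_cast hge
  have h2 : n ≤ 0 := by exact_mod_cast hle0
  have h3 : n ≠ -2 := fun h => hne2 (by rw [h]; push_cast; ring)
  have h4 : n ≠ 0 := fun h => hne0 (by rw [h]; push_cast; ring)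
  have : n = -1 := by omega
  rw [this]; push_cast; ring
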